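/- The value function V of the two-good problem is continuous on [0, ∞). -/

import Mathlib

open MeasureTheory Real Set Filter

/-- State trajectory `h^{h₀,ℓ}(t) = e^{−φt} h₀ + φ ∫₀ᵗ e^{−φ(t−s)} ℓ(s) ds`. -/
noncomputable def traj (φ h₀ : ℝ) (ℓ : ℝ → ℝ) (t : ℝ) : ℝ :=
  Real.exp (-(φ * t)) * h₀ + φ * ∫ s in (0:ℝ)..t, Real.exp (-(φ * (t - s))) * ℓ s

/-- Instantaneous utility of the two-good problem:
`U(ℓ, h) = ℓ^{1−σ} h^{γ(σ−1)} / (1−σ) + B̃ (1−ℓ)^{1−σ} / (1−σ)`, with `B̃ = B^{1−σ}`. -/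
noncomputable def U2 (σ γ B ℓ h : ℝ) : ℝ :=
  ℓ ^ (1 - σ) * h ^ (γ * (σ - 1)) / (1 - σ) +
    B ^ (1 - σ) * (1 - ℓ) ^ (1 - σ) / (1 - σ)

/-- Admissible controls: measurable, with values in `[ℓ̲, ℓ̄]`. -/
def Admissible (lo hi : ℝ) (ℓ : ℝ → ℝ) : Prop :=
  Measurable ℓ ∧ ∀ t, 0 ≤ t → ℓ t ∈ Set.Icc lo hi

/-- Value function of the two-good problem. -/
noncomputable def V (ρ φ σ γ B lo hi h₀ : ℝ) : ℝ :=
  sSup {x | ∃ ℓ : ℝ → ℝ, Admissible lo hi ℓ ∧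
    x = ∫ t in Set.Ioi (0:ℝ), Real.exp (-(ρ * t)) * U2 σ γ B (ℓ t) (traj φ h₀ ℓ t)}

lemma aux_intInt {φ : ℝ} (hφ : 0 < φ) {f : ℝ → ℝ} {c a b : ℝ} (hf : Measurable f)
    (hbd : ∀ s ∈ Set.uIoc a b, |f s| ≤ c) :
    IntervalIntegrable (fun s => Real.exp (φ * s) * f s) volume a b := by
  rw [intervalIntegrable_iff]
  have hmeas : AEStronglyMeasurable (fun s => Real.exp (φ * s) * f s)
      (volume.restrict (Set.uIoc a b)) :=
    ((Real.measurable_exp.comp (measurable_id.const_mul φ)).mul hf).aestronglyMeasurable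
  refine Integrable.mono' (g := fun _ => Real.exp (φ * (a ⊔ b)) * c)
    (integrableOn_const ?_) hmeas ?_
  · exact measure_Ioc_lt_top.ne
  · filter_upwards [ae_restrict_mem measurableSet_uIoc] with s hs
    have h1 : s ≤ a ⊔ b := hs.2
    have h2 : Real.exp (φ * s) ≤ Real.exp (φ * (a ⊔ b)) :=
      Real.exp_le_exp.2 (mul_le_mul_of_nonneg_left h1 hφ.le)
    rw [Real.norm_eq_abs, abs_mul, Real.abs_exp]
    exact mul_le_mul h2 (hbd s hs) (abs_nonneg _) (Real.exp_pos _).le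

lemma rpow_lipschitz {a M x y : ℝ} (ha : 1 ≤ a) (hM : 0 ≤ M)
    (hx : x ∈ Set.Icc 0 M) (hy : y ∈ Set.Icc 0 M) :
    |x ^ a - y ^ a| ≤ a * M ^ (a - 1) * |x - y| := by
  have key := Convex.norm_image_sub_le_of_norm_hasDerivWithin_le
    (f := fun u : ℝ => u ^ a) (f' := fun u : ℝ => a * u ^ (a - 1)) (s := Set.Icc 0 M)
    (C := a * M ^ (a - 1))
    (fun z _ => (Real.hasDerivAt_rpow_const (Or.inr ha)).hasDerivWithinAt)
    (fun z hz => ?_) (convex_Icc 0 M) hy hx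
  · simpa [Real.norm_eq_abs] using key
  · rw [Real.norm_eq_abs, abs_mul, abs_of_nonneg (by linarith : (0:ℝ) ≤ a),
      abs_of_nonneg (Real.rpow_nonneg hz.1 _)]
    exact mul_le_mul_of_nonneg_left (Real.rpow_le_rpow hz.1 hz.2 (by linarith)) (by linarith)

lemma traj_eq (φ h₀ : ℝ) (ℓ : ℝ → ℝ) (t : ℝ) :
    traj φ h₀ ℓ t = Real.exp (-(φ * t)) * h₀ +
      φ * (Real.exp (-(φ * t)) * ∫ s in (0:ℝ)..t, Real.exp (φ * s) * ℓ s) := by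
  unfold traj
  congr 2
  rw [← intervalIntegral.integral_const_mul]
  apply intervalIntegral.integral_congr
  intro s _
  show Real.exp (-(φ * (t - s))) * ℓ s = Real.exp (-(φ * t)) * (Real.exp (φ * s) * ℓ s)
  have h : -(φ * (t - s)) = -(φ * t) + φ * s := by ring
  rw [h, Real.exp_add, mul_assoc]

lemma traj_sub (φ h₀ h₁ : ℝ) (ℓ : ℝ → ℝ) (t : ℝ) :
    traj φ h₀ ℓ t - traj φ h₁ ℓ t = Real.exp (-(φ * t)) * (h₀ - h₁) := by
  unfold traj; ring

lemma traj_nonneg {φ lo hi h₀ : ℝ} {ℓ : ℝ → ℝ} (hφ : 0 < φ) (hlo : 0 < lo)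
    (hmem : ∀ s, 0 ≤ s → ℓ s ∈ Set.Icc lo hi) (hh₀ : 0 ≤ h₀) {t : ℝ} (ht : 0 ≤ t) :
    0 ≤ traj φ h₀ ℓ t := by
  unfold traj
  have h1 : 0 ≤ ∫ s in (0:ℝ)..t, Real.exp (-(φ * (t - s))) * ℓ s := by
    apply intervalIntegral.integral_nonneg ht
    intro s hs
    exact mul_nonneg (Real.exp_pos _).le (by linarith [(hmem s hs.1).1])
  positivity

lemma traj_le {φ lo hi h₀ : ℝ} {ℓ : ℝ → ℝ} (hφ : 0 < φ) (hlo : 0 < lo) (hlohi : lo ≤ hi)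
    (hℓ : Measurable ℓ) (hmem : ∀ s, 0 ≤ s → ℓ s ∈ Set.Icc lo hi) {t : ℝ} (ht : 0 ≤ t) :
    traj φ h₀ ℓ t ≤ h₀ * Real.exp (-(φ * t)) + hi := by
  rw [traj_eq]
  have hint : IntervalIntegrable (fun s => Real.exp (φ * s) * ℓ s) volume 0 t := by
    apply aux_intInt hφ hℓ (c := hi)
    intro s hs
    rw [Set.uIoc_of_le ht] at hs
    have := hmem s hs.1.le
    rw [abs_of_pos (lt_of_lt_of_le hlo this.1)]
    exact this.2
  have hint2 : IntervalIntegrable (fun s => Real.exp (φ * s) * hi) volume 0 t := by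
    apply aux_intInt hφ measurable_const
    intro s _
    rw [abs_of_pos (lt_of_lt_of_le hlo hlohi)]
  have h1 : (∫ s in (0:ℝ)..t, Real.exp (φ * s) * ℓ s) ≤ ∫ s in (0:ℝ)..t, Real.exp (φ * s) * hi := by
    apply intervalIntegral.integral_mono_on ht hint hint2
    intro s hs
    exact mul_le_mul_of_nonneg_left (hmem s hs.1).2 (Real.exp_pos _).le
  have h2 : (∫ s in (0:ℝ)..t, Real.exp (φ * s) * hi)
      = (Real.exp (φ * t) / φ - 1 / φ) * hi := by
    rw [intervalIntegral.integral_mul_const]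
    congr 1
    have hd : ∀ x ∈ Set.uIcc (0:ℝ) t, HasDerivAt (fun u => Real.exp (φ * u) / φ)
        (Real.exp (φ * x)) x := by
      intro x _
      have h := (((hasDerivAt_id x).const_mul φ).exp).div_const φ
      simpa [mul_div_assoc, mul_div_cancel_left₀ _ hφ.ne', mul_comm] using h
    rw [intervalIntegral.integral_eq_sub_of_hasDerivAt hd
      ((Real.continuous_exp.comp (continuous_const.mul continuous_id)).intervalIntegrable 0 t)]
    simp [mul_zero]
  have hexp : Real.exp (-(φ * t)) * Real.exp (φ * t) = 1 := by
    rw [← Real.exp_add]; simp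
  have hhi : 0 ≤ hi := by linarith
  have hexp2 : 0 < Real.exp (-(φ * t)) := Real.exp_pos _
  have : φ * (Real.exp (-(φ * t)) * ∫ s in (0:ℝ)..t, Real.exp (φ * s) * ℓ s)
      ≤ φ * (Real.exp (-(φ * t)) * ((Real.exp (φ * t) / φ - 1 / φ) * hi)) := by
    rw [← h2] at *
    exact mul_le_mul_of_nonneg_left (mul_le_mul_of_nonneg_left h1 hexp2.le) hφ.le
  have heq : φ * (Real.exp (-(φ * t)) * ((Real.exp (φ * t) / φ - 1 / φ) * hi))
      = (1 - Real.exp (-(φ * t))) * hi := by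
    field_simp
    nlinarith [hexp]
  nlinarith [this, heq, hexp2]

lemma U2_nonpos {σ γ B lo hi x h : ℝ} (hσ : 1 < σ) (hB : 0 < B) (hlo : 0 < lo)
    (hhi : hi < 1) (hx : x ∈ Set.Icc lo hi) (hh : 0 ≤ h) : U2 σ γ B x h ≤ 0 := by
  have hx0 : 0 < x := lt_of_lt_of_le hlo hx.1
  have hσ0 : 1 - σ < 0 := by linarith
  unfold U2
  apply add_nonpos
  · exact div_nonpos_of_nonneg_of_nonpos
      (mul_nonneg (Real.rpow_nonneg hx0.le _) (Real.rpow_nonneg hh _)) hσ0.le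
  · exact div_nonpos_of_nonneg_of_nonpos
      (mul_nonneg (Real.rpow_nonneg hB.le _) (Real.rpow_nonneg (by linarith [hx.2]) _)) hσ0.le

lemma U2_abs_le {σ γ B lo hi x h M : ℝ} (hσ : 1 < σ) (hγσ : 0 < γ * (σ - 1)) (hB : 0 < B)
    (hlo : 0 < lo) (hhi : hi < 1) (hx : x ∈ Set.Icc lo hi) (hh : h ∈ Set.Icc 0 M) :
    |U2 σ γ B x h| ≤ lo ^ (1 - σ) * M ^ (γ * (σ - 1)) / (σ - 1)
      + B ^ (1 - σ) * (1 - hi) ^ (1 - σ) / (σ - 1) := by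
  have hx0 : 0 < x := lt_of_lt_of_le hlo hx.1
  have h1x : 0 < 1 - x := by linarith [hx.2]
  have h1hi : 0 < 1 - hi := by linarith
  have habs : |U2 σ γ B x h| = x ^ (1 - σ) * h ^ (γ * (σ - 1)) / (σ - 1)
      + B ^ (1 - σ) * (1 - x) ^ (1 - σ) / (σ - 1) := by
    rw [abs_of_nonpos (U2_nonpos hσ hB hlo hhi hx hh.1)]
    unfold U2
    have h2 : (1:ℝ) - σ ≠ 0 := by linarith
    have h3 : σ - 1 ≠ 0 := by linarith
    field_simp
    ring
  rw [habs]
  have hb1 : x ^ (1 - σ) ≤ lo ^ (1 - σ) :=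
    Real.rpow_le_rpow_of_nonpos hlo hx.1 (by linarith)
  have hb2 : h ^ (γ * (σ - 1)) ≤ M ^ (γ * (σ - 1)) :=
    Real.rpow_le_rpow hh.1 hh.2 hγσ.le
  have hb3 : (1 - x) ^ (1 - σ) ≤ (1 - hi) ^ (1 - σ) :=
    Real.rpow_le_rpow_of_nonpos h1hi (by linarith [hx.2]) (by linarith)
  have hσ1 : (0:ℝ) < σ - 1 := by linarith
  gcongr <;>
    first
      | exact Real.rpow_nonneg hx0.le _
      | exact Real.rpow_nonneg hh.1 _
      | exact Real.rpow_nonneg hB.le _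
      | assumption
      | linarith

lemma integrand_aesm {ρ φ σ γ B lo hi h₀ : ℝ} {ℓ : ℝ → ℝ}
    (hφ : 0 < φ) (hσ : 1 < σ) (hγσ : 0 < γ * (σ - 1)) (hlo : 0 < lo) (hlohi : lo ≤ hi)
    (hhi : hi < 1) (hadm : Admissible lo hi ℓ) :
    AEStronglyMeasurable (fun t => Real.exp (-(ρ * t)) * U2 σ γ B (ℓ t) (traj φ h₀ ℓ t))
      (volume.restrict (Set.Ioi (0:ℝ))) := by
  obtain ⟨hmeas, hmem⟩ := hadm
  set ℓ' : ℝ → ℝ := fun s => min hi (max lo (ℓ s)) with hℓ'def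
  have hℓ'meas : Measurable ℓ' := measurable_const.min (measurable_const.max hmeas)
  have hℓ'mem : ∀ s, ℓ' s ∈ Set.Icc lo hi := fun s =>
    ⟨le_min hlohi (le_max_left _ _), min_le_left _ _⟩
  have hℓ'eq : ∀ s, 0 ≤ s → ℓ' s = ℓ s := by
    intro s hs
    have h := hmem s hs
    simp only [hℓ'def, max_eq_right h.1, min_eq_right h.2]
  have hprim : Continuous fun t => ∫ s in (0:ℝ)..t, Real.exp (φ * s) * ℓ' s := by
    apply intervalIntegral.continuous_primitive
    intro a b
    apply aux_intInt hφ hℓ'meas (c := hi)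
    intro s _
    rw [abs_of_pos (lt_of_lt_of_le hlo (hℓ'mem s).1)]
    exact (hℓ'mem s).2
  have he : Continuous fun t : ℝ => Real.exp (-(φ * t)) :=
    Real.continuous_exp.comp (continuous_const.mul continuous_id).neg
  set G : ℝ → ℝ := fun t => Real.exp (-(φ * t)) * h₀ +
    φ * (Real.exp (-(φ * t)) * ∫ s in (0:ℝ)..t, Real.exp (φ * s) * ℓ' s) with hGdef
  have hGcont : Continuous G :=
    (he.mul continuous_const).add (continuous_const.mul (he.mul hprim))
  have hGeq : ∀ t, 0 ≤ t → traj φ h₀ ℓ t = G t := by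
    intro t ht
    rw [traj_eq φ h₀ ℓ t, hGdef]
    have h : (∫ s in (0:ℝ)..t, Real.exp (φ * s) * ℓ s)
        = ∫ s in (0:ℝ)..t, Real.exp (φ * s) * ℓ' s := by
      apply intervalIntegral.integral_congr
      intro s hs
      rw [Set.uIcc_of_le ht] at hs
      show Real.exp (φ * s) * ℓ s = Real.exp (φ * s) * ℓ' s
      rw [hℓ'eq s hs.1]
    rw [h]
  set F : ℝ → ℝ := fun t => Real.exp (-(ρ * t)) *
    (Real.exp (Real.log (ℓ t) * (1 - σ)) * G t ^ (γ * (σ - 1)) / (1 - σ) +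
     B ^ (1 - σ) * Real.exp (Real.log (1 - ℓ t) * (1 - σ)) / (1 - σ)) with hFdef
  have hFmeas : Measurable F := by
    have h1 : Measurable fun t => Real.exp (Real.log (ℓ t) * (1 - σ)) :=
      Real.measurable_exp.comp ((Real.measurable_log.comp hmeas).mul_const _)
    have h2 : Measurable fun t => Real.exp (Real.log (1 - ℓ t) * (1 - σ)) :=
      Real.measurable_exp.comp
        ((Real.measurable_log.comp (measurable_const.sub hmeas)).mul_const _)
    have h3 : Measurable fun t => G t ^ (γ * (σ - 1)) :=
      (Real.continuous_rpow_const hγσ.le).measurable.comp hGcont.measurable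
    have he2 : Measurable fun t : ℝ => Real.exp (-(ρ * t)) :=
      Real.measurable_exp.comp (measurable_id.const_mul ρ).neg
    exact he2.mul (((h1.mul h3).div_const _).add ((h2.const_mul _).div_const _))
  apply hFmeas.aestronglyMeasurable.restrict.congr
  filter_upwards [ae_restrict_mem measurableSet_Ioi] with t ht
  have ht0 : (0:ℝ) ≤ t := le_of_lt ht
  have hm := hmem t ht0
  rw [hFdef]
  simp only
  rw [U2, hGeq t ht0,
    Real.rpow_def_of_pos (lt_of_lt_of_le hlo hm.1),
    Real.rpow_def_of_pos (by linarith [hm.2] : (0:ℝ) < 1 - ℓ t)]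

lemma J_integrableOn {ρ φ σ γ B lo hi h₀ : ℝ} {ℓ : ℝ → ℝ}
    (hρ : 0 < ρ) (hφ : 0 < φ) (hσ : 1 < σ) (hγσ : 0 < γ * (σ - 1)) (hB : 0 < B)
    (hlo : 0 < lo) (hlohi : lo ≤ hi) (hhi : hi < 1) (hh₀ : 0 ≤ h₀)
    (hadm : Admissible lo hi ℓ) :
    IntegrableOn (fun t => Real.exp (-(ρ * t)) * U2 σ γ B (ℓ t) (traj φ h₀ ℓ t))
      (Set.Ioi (0:ℝ)) := by
  set K := lo ^ (1 - σ) * (h₀ + hi) ^ (γ * (σ - 1)) / (σ - 1)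
      + B ^ (1 - σ) * (1 - hi) ^ (1 - σ) / (σ - 1) with hKdef
  refine Integrable.mono' ((exp_neg_integrableOn_Ioi 0 hρ).mul_const K)
    (integrand_aesm hφ hσ hγσ hlo hlohi hhi hadm) ?_
  filter_upwards [ae_restrict_mem measurableSet_Ioi] with t ht
  have ht0 : (0:ℝ) ≤ t := le_of_lt ht
  have hm := hadm.2 t ht0
  have htr0 : 0 ≤ traj φ h₀ ℓ t := traj_nonneg hφ hlo hadm.2 hh₀ ht0
  have htr1 : traj φ h₀ ℓ t ≤ h₀ + hi := by
    have h := traj_le (h₀ := h₀) hφ hlo hlohi hadm.1 hadm.2 ht0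
    have : h₀ * Real.exp (-(φ * t)) ≤ h₀ :=
      mul_le_of_le_one_right hh₀ (Real.exp_le_one_iff.2 (by nlinarith))
    linarith
  rw [Real.norm_eq_abs, abs_mul, Real.abs_exp]
  have hb := mul_le_mul_of_nonneg_left
    (U2_abs_le hσ hγσ hB hlo hhi hm ⟨htr0, htr1⟩) (Real.exp_pos (-(ρ * t))).le
  simpa [hKdef, neg_mul] using hb

lemma traj_mem_box {φ lo hi h₀ R : ℝ} {ℓ : ℝ → ℝ} (hφ : 0 < φ) (hlo : 0 < lo)
    (hlohi : lo ≤ hi) (hhi : hi < 1) (hℓ : Measurable ℓ)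
    (hmem : ∀ s, 0 ≤ s → ℓ s ∈ Set.Icc lo hi) (hh₀ : h₀ ∈ Set.Icc 0 R) {t : ℝ} (ht : 0 ≤ t) :
    traj φ h₀ ℓ t ∈ Set.Icc 0 (R + 1) := by
  refine ⟨traj_nonneg hφ hlo hmem hh₀.1 ht, ?_⟩
  have h := traj_le (h₀ := h₀) hφ hlo hlohi hℓ hmem ht
  have h2 : h₀ * Real.exp (-(φ * t)) ≤ R :=
    le_trans (mul_le_of_le_one_right hh₀.1 (Real.exp_le_one_iff.2 (by nlinarith))) hh₀.2
  linarith

lemma J_diff_le {ρ φ σ γ B lo hi h₀ h₁ R : ℝ} {ℓ : ℝ → ℝ}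
    (hρ : 0 < ρ) (hφ : 0 < φ) (hσ : 1 < σ) (hγσ : 1 < γ * (σ - 1)) (hB : 0 < B)
    (hlo : 0 < lo) (hlohi : lo ≤ hi) (hhi : hi < 1) (hR : 0 ≤ R)
    (hh₀ : h₀ ∈ Set.Icc 0 R) (hh₁ : h₁ ∈ Set.Icc 0 R) (hadm : Admissible lo hi ℓ) :
    |(∫ t in Set.Ioi (0:ℝ), Real.exp (-(ρ * t)) * U2 σ γ B (ℓ t) (traj φ h₀ ℓ t)) -
      ∫ t in Set.Ioi (0:ℝ), Real.exp (-(ρ * t)) * U2 σ γ B (ℓ t) (traj φ h₁ ℓ t)| ≤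
    (lo ^ (1 - σ) * (γ * (σ - 1)) * (R + 1) ^ (γ * (σ - 1) - 1) / (σ - 1)) * |h₀ - h₁| *
      ∫ t in Set.Ioi (0:ℝ), Real.exp (-(ρ * t)) := by
  set a := γ * (σ - 1) with hadef
  set D := lo ^ (1 - σ) * a * (R + 1) ^ (a - 1) / (σ - 1) with hDdef
  have hγσ0 : 0 < a := by linarith
  have hint₀ := J_integrableOn (h₀ := h₀) hρ hφ hσ hγσ0 hB hlo hlohi hhi hh₀.1 hadm
  have hint₁ := J_integrableOn (h₀ := h₁) hρ hφ hσ hγσ0 hB hlo hlohi hhi hh₁.1 hadm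
  rw [← integral_sub hint₀ hint₁]
  have hp1 : 0 ≤ lo ^ (1 - σ) := Real.rpow_nonneg hlo.le _
  have hp2 : 0 ≤ (R + 1) ^ (a - 1) := Real.rpow_nonneg (by linarith) _
  have hσ1 : (0:ℝ) < σ - 1 := by linarith
  have hDpos : 0 ≤ D := by
    rw [hDdef]
    exact div_nonneg (mul_nonneg (mul_nonneg hp1 hγσ0.le) hp2) hσ1.le
  have key := norm_integral_le_of_norm_le
    (f := fun t => Real.exp (-(ρ * t)) * U2 σ γ B (ℓ t) (traj φ h₀ ℓ t) -
      Real.exp (-(ρ * t)) * U2 σ γ B (ℓ t) (traj φ h₁ ℓ t))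
    (g := fun t => D * |h₀ - h₁| * Real.exp (-(ρ * t)))
    (μ := volume.restrict (Set.Ioi (0:ℝ)))
    (((exp_neg_integrableOn_Ioi 0 hρ).const_mul (D * |h₀ - h₁|)).congr ?_) ?_
  · rw [Real.norm_eq_abs] at key
    exact key.trans (le_of_eq (integral_const_mul _ _))
  · apply EventuallyEq.symm
    filter_upwards with t
    rw [neg_mul]
  · filter_upwards [ae_restrict_mem measurableSet_Ioi] with t ht
    have ht0 : (0:ℝ) ≤ t := le_of_lt ht
    have hm := hadm.2 t ht0
    have hx0 : 0 < ℓ t := lt_of_lt_of_le hlo hm.1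
    have htr₀ := traj_mem_box hφ hlo hlohi hhi hadm.1 hadm.2 hh₀ ht0
    have htr₁ := traj_mem_box hφ hlo hlohi hhi hadm.1 hadm.2 hh₁ ht0
    have hU : U2 σ γ B (ℓ t) (traj φ h₀ ℓ t) - U2 σ γ B (ℓ t) (traj φ h₁ ℓ t)
        = (ℓ t) ^ (1 - σ) * ((traj φ h₀ ℓ t) ^ a - (traj φ h₁ ℓ t) ^ a) / (1 - σ) := by
      rw [U2, U2, hadef]; ring
    have hkey : |(traj φ h₀ ℓ t) ^ a - (traj φ h₁ ℓ t) ^ a| ≤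
        a * (R + 1) ^ (a - 1) * |h₀ - h₁| := by
      have h1 := rpow_lipschitz (a := a) (M := R + 1) (by linarith) (by linarith) htr₀ htr₁
      refine h1.trans ?_
      have h2 : |traj φ h₀ ℓ t - traj φ h₁ ℓ t| ≤ |h₀ - h₁| := by
        rw [traj_sub, abs_mul, Real.abs_exp]
        exact mul_le_of_le_one_left (abs_nonneg _) (Real.exp_le_one_iff.2 (by nlinarith))
      exact mul_le_mul_of_nonneg_left h2 (mul_nonneg hγσ0.le hp2)
    rw [Real.norm_eq_abs, ← mul_sub, abs_mul, Real.abs_exp, hU]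
    rw [mul_comm (D * |h₀ - h₁|) (Real.exp (-(ρ * t)))]
    apply mul_le_mul_of_nonneg_left _ (Real.exp_pos _).le
    rw [abs_div, abs_mul, abs_of_nonneg (Real.rpow_nonneg hx0.le _),
      abs_of_neg (by linarith : (1:ℝ) - σ < 0)]
    have hll : (ℓ t) ^ (1 - σ) ≤ lo ^ (1 - σ) :=
      Real.rpow_le_rpow_of_nonpos hlo hm.1 (by linarith)
    have hneg : -((1:ℝ) - σ) = σ - 1 := by ring
    rw [hneg]
    have hnum : (ℓ t) ^ (1 - σ) * |(traj φ h₀ ℓ t) ^ a - (traj φ h₁ ℓ t) ^ a|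
        ≤ lo ^ (1 - σ) * (a * (R + 1) ^ (a - 1) * |h₀ - h₁|) :=
      mul_le_mul hll hkey (abs_nonneg _) hp1
    have hDeq : D * |h₀ - h₁| = lo ^ (1 - σ) * (a * (R + 1) ^ (a - 1) * |h₀ - h₁|) / (σ - 1) := by
      rw [hDdef]; ring
    rw [hDeq]
    exact (div_le_div_iff_of_pos_right hσ1).2 hnum

/-- the value function `V` of the two-good problem is continuous on `[0, ∞)`. -/
theorem V_continuousOn (ρ φ σ γ B lo hi : ℝ)
    (hρ : 0 < ρ) (hφ : 0 < φ) (hσ : 1 < σ) (hγ0 : 0 < γ) (hγ1 : γ < 1)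
    (hγσ : 1 < γ * (σ - 1)) (hB : 0 < B) (hlo : 0 < lo) (hlohi : lo ≤ hi) (hhi : hi < 1) :
    ContinuousOn (V ρ φ σ γ B lo hi) (Set.Ici (0:ℝ)) := by
  set S : ℝ → Set ℝ := fun h₀ => {x | ∃ ℓ : ℝ → ℝ, Admissible lo hi ℓ ∧
    x = ∫ t in Set.Ioi (0:ℝ), Real.exp (-(ρ * t)) * U2 σ γ B (ℓ t) (traj φ h₀ ℓ t)} with hSdef
  have hVdef : ∀ h₀, V ρ φ σ γ B lo hi h₀ = sSup (S h₀) := fun _ => rfl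
  have hne : ∀ h₀ : ℝ, (S h₀).Nonempty := by
    intro h₀
    exact ⟨_, (fun _ => lo), ⟨measurable_const, fun t _ => ⟨le_refl lo, hlohi⟩⟩, rfl⟩
  have hbdd : ∀ h₀ : ℝ, 0 ≤ h₀ → ∀ x ∈ S h₀, x ≤ 0 := by
    rintro h₀ hh₀ x ⟨ℓ, hadm, rfl⟩
    apply integral_nonpos_of_ae
    filter_upwards [ae_restrict_mem measurableSet_Ioi] with t ht
    have ht0 : (0:ℝ) ≤ t := le_of_lt ht
    exact mul_nonpos_of_nonneg_of_nonpos (Real.exp_pos _).le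
      (U2_nonpos hσ hB hlo hhi (hadm.2 t ht0) (traj_nonneg hφ hlo hadm.2 hh₀ ht0))
  have key : ∀ R : ℝ, 0 ≤ R → ∃ C : ℝ, 0 ≤ C ∧ ∀ h₀ ∈ Set.Icc (0:ℝ) R, ∀ h₁ ∈ Set.Icc (0:ℝ) R,
      |V ρ φ σ γ B lo hi h₀ - V ρ φ σ γ B lo hi h₁| ≤ C * |h₀ - h₁| := by
    intro R hR
    set D := lo ^ (1 - σ) * (γ * (σ - 1)) * (R + 1) ^ (γ * (σ - 1) - 1) / (σ - 1) with hDdef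
    set Iρ := ∫ t in Set.Ioi (0:ℝ), Real.exp (-(ρ * t)) with hIdef
    have hD0 : 0 ≤ D := by
      have hp1 : 0 ≤ lo ^ (1 - σ) := Real.rpow_nonneg hlo.le _
      have hp2 : 0 ≤ (R + 1) ^ (γ * (σ - 1) - 1) := Real.rpow_nonneg (by linarith) _
      rw [hDdef]
      exact div_nonneg (mul_nonneg (mul_nonneg hp1 (by linarith)) hp2) (by linarith)
    have hI0 : 0 ≤ Iρ :=
      integral_nonneg fun t => (Real.exp_pos _).le
    refine ⟨D * Iρ, mul_nonneg hD0 hI0, ?_⟩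
    have half : ∀ h₀ ∈ Set.Icc (0:ℝ) R, ∀ h₁ ∈ Set.Icc (0:ℝ) R,
        V ρ φ σ γ B lo hi h₀ ≤ V ρ φ σ γ B lo hi h₁ + D * Iρ * |h₀ - h₁| := by
      intro h₀ hh₀ h₁ hh₁
      rw [hVdef, hVdef]
      apply csSup_le (hne h₀)
      rintro x ⟨ℓ, hadm, rfl⟩
      have hdiff := J_diff_le hρ hφ hσ hγσ hB hlo hlohi hhi hR hh₀ hh₁ hadm
      have hmem : (∫ t in Set.Ioi (0:ℝ), Real.exp (-(ρ * t)) * U2 σ γ B (ℓ t) (traj φ h₁ ℓ t))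
          ∈ S h₁ := ⟨ℓ, hadm, rfl⟩
      have hle := le_csSup ⟨0, fun y hy => hbdd h₁ hh₁.1 y hy⟩ hmem
      have habs := abs_le.1 hdiff
      have heq : lo ^ (1 - σ) * (γ * (σ - 1)) * (R + 1) ^ (γ * (σ - 1) - 1) / (σ - 1) *
          |h₀ - h₁| * Iρ = D * Iρ * |h₀ - h₁| := by rw [hDdef]; ring
      linarith [habs.2, heq ▸ habs.2]
    intro h₀ hh₀ h₁ hh₁
    rw [abs_sub_le_iff]
    constructor
    · have := half h₀ hh₀ h₁ hh₁; linarith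
    · have := half h₁ hh₁ h₀ hh₀
      rw [abs_sub_comm h₁ h₀] at this
      linarith
  intro x hx
  have hx0 : (0:ℝ) ≤ x := hx
  obtain ⟨C, hC0, hC⟩ := key (x + 1) (by linarith)
  have hlip : LipschitzOnWith (Real.toNNReal C) (V ρ φ σ γ B lo hi) (Set.Icc 0 (x + 1)) := by
    rw [lipschitzOnWith_iff_dist_le_mul]
    intro p hp q hq
    rw [Real.dist_eq, Real.dist_eq]
    calc |V ρ φ σ γ B lo hi p - V ρ φ σ γ B lo hi q| ≤ C * |p - q| := hC p hp q hq
    _ ≤ (Real.toNNReal C : ℝ) * |p - q| :=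
        mul_le_mul_of_nonneg_right (Real.le_coe_toNNReal C) (abs_nonneg _)
  refine (hlip.continuousOn.continuousWithinAt ⟨hx0, by linarith⟩).mono_of_mem_nhdsWithin ?_
  have : Set.Icc (0:ℝ) (x + 1) = Set.Ici (0:ℝ) ∩ Set.Iic (x + 1) := (Set.Ici_inter_Iic).symm
  rw [this]
  exact inter_mem self_mem_nhdsWithin (mem_nhdsWithin_of_mem_nhds (Iic_mem_nhds (by linarith)))
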